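/- arXiv:1509.06474 — 5 statements merged into one kernel-verified Lean document; each statement's English description precedes it below -/
import Mathlib

section
/- Let U be a nonprincipal ultrafilter on a countably infinite set I and let *ℤ = ∏_U ℤ. Then the ideal J = ⋂_{i∈ℕ} 2^i·*ℤ of *ℤ is not finitely generated; in particular *ℤ is not Noetherian. -/
open Filter

/-- Let `U` be a nonprincipal ultrafilter on a countably infinite set `I` and
`*ℤ = ∏_U ℤ`. The ideal `J = ⋂_{i ∈ ℕ} 2^i·*ℤ` is not finitely generated; in particular
`*ℤ` is not Noetherian. -/
theorem ultrapower_int_not_noetherian {I : Type*} [Countable I] [Infinite I]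
    (U : Ultrafilter I) (hU : ∀ i : I, U ≠ pure i) :
    ¬ (⨅ i : ℕ, Ideal.span {(((2 ^ i : ℤ) : ℤ) : (↑U : Filter I).Germ ℤ)}).FG ∧
      ¬ IsNoetherianRing ((↑U : Filter I).Germ ℤ) := by
  -- U contains the cofinite filter
  have hcof : (↑U : Filter I) ≤ cofinite := by
    rcases U.le_cofinite_or_eq_pure with h | ⟨a, ha⟩
    · exact h
    · exact absurd ha (hU a)
  set R := (↑U : Filter I).Germ ℤ
  set J : Ideal R := ⨅ i : ℕ, Ideal.span {(((2 ^ i : ℤ) : ℤ) : R)} with hJ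
  -- int cast of 2^i is the constant germ
  have hconst : ∀ i : ℕ, (((2 ^ i : ℤ) : ℤ) : R) = ((fun _ => (2:ℤ)^i : I → ℤ) : R) := by
    intro i; rfl
  -- no zero divisors (ultrafilter)
  have hnzd : ∀ x y : R, x * y = 0 → x = 0 ∨ y = 0 := by
    intro x y
    refine x.inductionOn fun f => y.inductionOn fun g h => ?_
    have h' : ∀ᶠ j in (↑U : Filter I), f j * g j = 0 := by
      rw [← Germ.coe_mul] at h
      exact Germ.coe_eq.1 h
    have : ∀ᶠ j in (↑U : Filter I), f j = 0 ∨ g j = 0 :=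
      h'.mono fun j hj => mul_eq_zero.1 hj
    rcases (Ultrafilter.eventually_or).1 this with h1 | h1
    · exact Or.inl (Germ.coe_eq.2 h1)
    · exact Or.inr (Germ.coe_eq.2 h1)
  -- the witness element
  obtain ⟨e⟩ : Nonempty (ℕ ≃ I) := nonempty_equiv_of_countable
  set a : I → ℤ := fun j => 2 ^ (e.symm j) with haa
  have hmemS : ∀ i : ℕ, {j : I | i ≤ e.symm j} ∈ (↑U : Filter I) := by
    intro i
    apply hcof
    rw [mem_cofinite]
    have : {j : I | i ≤ e.symm j}ᶜ ⊆ e '' (Set.Iio i) := by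
      intro j hj
      exact ⟨e.symm j, by simpa using hj, e.apply_symm_apply j⟩
    exact Set.Finite.subset ((Set.finite_Iio i).image e) this
  have haJ : (↑a : R) ∈ J := by
    rw [hJ, Submodule.mem_iInf]
    intro i
    rw [Ideal.mem_span_singleton, hconst]
    refine ⟨((fun j => 2 ^ (e.symm j - i) : I → ℤ) : R), ?_⟩
    rw [← Germ.coe_mul]
    refine Germ.coe_eq.2 ?_
    filter_upwards [hmemS i] with j hj
    simp only [Pi.mul_apply, haa]
    rw [← pow_add, Nat.add_sub_cancel' hj]
  have haNe : (↑a : R) ≠ 0 := by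
    intro h
    have h' : ∀ᶠ j in (↑U : Filter I), a j = 0 := Germ.coe_eq.1 h
    rcases h'.exists with ⟨j, hj⟩
    exact pow_ne_zero _ (by norm_num) hj
  -- J ≤ (2) • J
  have hle : J ≤ (Ideal.span {(2 : R)}) • J := by
    intro x hx
    have hx1 : x ∈ Ideal.span {(((2 ^ 1 : ℤ) : ℤ) : R)} := (Submodule.mem_iInf _).1 hx 1
    rw [Ideal.mem_span_singleton] at hx1
    obtain ⟨y, hy⟩ := hx1
    have h2 : (((2 ^ 1 : ℤ) : ℤ) : R) = (2 : R) := by push_cast; ring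
    rw [h2] at hy
    have hyJ : y ∈ J := by
      rw [hJ, Submodule.mem_iInf]
      intro i
      have hxi : x ∈ Ideal.span {(((2 ^ (i+1) : ℤ) : ℤ) : R)} := (Submodule.mem_iInf _).1 hx (i+1)
      rw [Ideal.mem_span_singleton] at hxi
      obtain ⟨z, hz⟩ := hxi
      rw [Ideal.mem_span_singleton]
      refine ⟨z, ?_⟩
      have hcalc : (2 : R) * y = (2 : R) * ((((2 ^ i : ℤ) : ℤ) : R) * z) := by
        rw [← hy, hz]
        push_cast
        rw [show ((2 ^ (i + 1) : ℤ) : R) = (((2 ^ i : ℤ) : ℤ) : R) * (2 : R) from rfl]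
        ring
      have h2ne : (2 : R) ≠ 0 := by
        intro h
        have := Germ.coe_eq.1 (h : ((fun _ => (2:ℤ) : I → ℤ) : R) = ((fun _ => (0:ℤ) : I → ℤ) : R))
        rcases this.exists with ⟨j, hj⟩
        norm_num at hj
      rcases hnzd 2 (y - (((2 ^ i : ℤ) : ℤ) : R) * z) (by rw [mul_sub, hcalc]; ring) with h | h
      · exact absurd h h2ne
      · linear_combination h
    have : x = (2 : R) • y := by rw [smul_eq_mul, hy]
    rw [this]
    exact Submodule.smul_mem_smul (Ideal.mem_span_singleton_self _) hyJ
  have key : ¬ J.FG := by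
    intro hfg
    obtain ⟨r, hr1, hr0⟩ :=
      Submodule.exists_sub_one_mem_and_smul_eq_zero_of_fg_of_le_smul _ J hfg hle
    have hra : r * (↑a : R) = 0 := by
      have := hr0 _ haJ
      rwa [smul_eq_mul] at this
    rcases hnzd _ _ hra with h | h
    · -- r = 0, so -1 ∈ (2)
      rw [h, zero_sub, Ideal.mem_span_singleton] at hr1
      obtain ⟨t, ht⟩ := hr1
      refine t.inductionOn (fun g hg => ?_) ht
      have step : ((fun _ => (-1:ℤ) : I → ℤ) : R) = ((fun j => 2 * g j : I → ℤ) : R) := by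
        calc ((fun _ => (-1:ℤ) : I → ℤ) : R) = ((-1 : ℤ) : R) := rfl
          _ = -1 := by push_cast; ring
          _ = 2 * ↑g := hg
          _ = ((fun _ => (2:ℤ) : I → ℤ) : R) * ↑g := rfl
          _ = ((fun j => 2 * g j : I → ℤ) : R) := by rw [← Germ.coe_mul]; rfl
      have h' := (Germ.coe_eq.1 step).exists
      rcases h' with ⟨j, hj⟩
      simp only [] at hj
      omega
    · exact haNe h
  exact ⟨key, fun hN => key ((isNoetherianRing_iff_ideal_fg R).1 hN J)⟩
end

section
/- Let U be an ultrafilter on I, *ℚ = ∏_U ℚ. Two nonzero elements a, b ∈ *ℚ are equal if and only if they have the same sign (a·b > 0) and v_p(a) = v_p(b) for every prime p of *ℤ = ∏_U ℤ, where v_p is the valuation on *ℚ extended from *ℤ by v_p(x/y) = v_p(x) − v_p(y). -/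
open Filter

/-- The componentwise `p`-adic valuation on the ultrapower `*ℚ = ∏_U ℚ`, with values
in `*ℤ = ∏_U ℤ`: on representatives it sends `(p_i), (x_i)` to `(v_{p_i}(x_i))`. -/
noncomputable def nsValQ {I : Type*} {U : Ultrafilter I}
    (p : (↑U : Filter I).Germ ℤ) (x : (↑U : Filter I).Germ ℚ) : (↑U : Filter I).Germ ℤ :=
  Filter.Germ.map₂ (fun (q : ℤ) (r : ℚ) => padicValRat q.natAbs r) p x

/-- A positive rational with vanishing `p`-adic valuation for all primes `p` is `1`. -/
lemma eq_one_of_padicValRat_eq_zero (x : ℚ) (hx : 0 < x)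
    (h : ∀ p : ℕ, p.Prime → padicValRat p x = 0) : x = 1 := by
  have hnum : x.num.natAbs ≠ 0 := by
    simpa using (Rat.num_ne_zero.mpr hx.ne')
  have hden : x.den ≠ 0 := x.den_nz
  have hval : ∀ p : ℕ, p.Prime → padicValNat p x.num.natAbs = padicValNat p x.den := by
    intro p hp
    have := h p hp
    rw [padicValRat_def, padicValInt, sub_eq_zero] at this
    exact_mod_cast this
  have heq : x.num.natAbs = x.den :=
    (Nat.eq_iff_prime_padicValNat_eq _ _ hnum hden).mpr hval
  have hnumpos : 0 < x.num := Rat.num_pos.mpr hx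
  have : x.num = (x.den : ℤ) := by
    rw [← heq]; exact (Int.natAbs_of_nonneg hnumpos.le).symm
  rw [← Rat.num_div_den x, this]
  push_cast
  exact div_self (by exact_mod_cast hden)

/-- Two nonzero rationals of the same sign with equal `p`-adic valuations are equal. -/
lemma rat_eq_of_padicValRat_eq (q r : ℚ) (hq : q ≠ 0) (hr : r ≠ 0) (hqr : 0 < q * r)
    (h : ∀ p : ℕ, p.Prime → padicValRat p q = padicValRat p r) : q = r := by
  have hx : 0 < q / r := div_pos_iff.mpr (by rcases mul_pos_iff.mp hqr with h | h
                                             · exact Or.inl h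
                                             · exact Or.inr h)
  have : q / r = 1 := by
    apply eq_one_of_padicValRat_eq_zero _ hx
    intro p hp
    haveI : Fact p.Prime := ⟨hp⟩
    rw [padicValRat.div (p := p) hq hr, h p hp, sub_self]
  field_simp at this
  exact this

/-- Infinite factorization in `*ℚ = ∏_U ℚ`: two nonzero elements `a, b` of `*ℚ` are equal
if and only if they have the same sign (`a·b > 0`) and `v_p(a) = v_p(b)` for every prime
`p` of `*ℤ`, where `v_p` is the componentwise `p`-adic valuation on `*ℚ`. -/
theorem ultrapower_rat_factorization {I : Type*} (U : Ultrafilter I)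
    (a b : (↑U : Filter I).Germ ℚ) (ha : a ≠ 0) (hb : b ≠ 0) :
    a = b ↔
      (0 < a * b ∧ ∀ p : I → ℤ, {i : I | 0 < p i ∧ Prime (p i)} ∈ U →
        nsValQ (↑p) a = nsValQ (↑p) b) := by
  constructor
  · rintro rfl
    exact ⟨mul_self_pos.mpr ha, fun p _ => rfl⟩
  · rintro ⟨hpos, hval⟩
    induction a using Filter.Germ.inductionOn with | h f =>
    induction b using Filter.Germ.inductionOn with | h g =>
    by_contra hne
    have coe0 : (0 : (↑U : Filter I).Germ ℚ) = ((fun _ : I => (0:ℚ)) : (↑U : Filter I).Germ ℚ) := rfl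
    have hf0 : {i | f i ≠ 0} ∈ U := by
      rw [Ne, coe0, Filter.Germ.coe_eq] at ha
      exact Ultrafilter.eventually_not.mpr ha
    have hg0 : {i | g i ≠ 0} ∈ U := by
      rw [Ne, coe0, Filter.Germ.coe_eq] at hb
      exact Ultrafilter.eventually_not.mpr hb
    have hprod : {i | 0 < f i * g i} ∈ U := by
      have : (0 : (↑U : Filter I).Germ ℚ) < ↑(fun i => f i * g i) := hpos
      exact Filter.Germ.coe_pos.mp this
    have hneq : {i | f i ≠ g i} ∈ U := by
      rw [Filter.Germ.coe_eq] at hne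
      exact Ultrafilter.eventually_not.mpr hne
    have hS : {i | f i ≠ 0 ∧ g i ≠ 0 ∧ 0 < f i * g i ∧ f i ≠ g i} ∈ U := by
      filter_upwards [hf0, hg0, hprod, hneq] with i h1 h2 h3 h4
      exact ⟨h1, h2, h3, h4⟩
    have hex : ∀ i, ∃ q : ℕ, q.Prime ∧
        ((f i ≠ 0 ∧ g i ≠ 0 ∧ 0 < f i * g i ∧ f i ≠ g i) →
          padicValRat q (f i) ≠ padicValRat q (g i)) := by
      intro i
      by_cases hi : f i ≠ 0 ∧ g i ≠ 0 ∧ 0 < f i * g i ∧ f i ≠ g i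
      · obtain ⟨h1, h2, h3, h4⟩ := hi
        by_contra hcon
        push_neg at hcon
        exact h4 (rat_eq_of_padicValRat_eq _ _ h1 h2 h3 fun q hq => (hcon q hq).2)
      · exact ⟨2, Nat.prime_two, fun h => absurd h hi⟩
    set P : I → ℤ := fun i => ((hex i).choose : ℤ) with hP
    have hPmem : {i : I | 0 < P i ∧ Prime (P i)} ∈ U := by
      have : ∀ i, 0 < P i ∧ Prime (P i) := fun i =>
        ⟨Int.natCast_pos.mpr (hex i).choose_spec.1.pos,
         Int.prime_iff_natAbs_prime.mpr (by simp only [hP, Int.natAbs_natCast]; exact (hex i).choose_spec.1)⟩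
      exact Filter.univ_mem' this
    have := hval P hPmem
    simp only [nsValQ, Filter.Germ.map₂_coe, Filter.Germ.coe_eq] at this
    have key : {i | padicValRat (P i).natAbs (f i) = padicValRat (P i).natAbs (g i)} ∈ U := this
    obtain ⟨i, hi1, hi2⟩ := Filter.nonempty_of_mem (Filter.inter_mem hS key)
    have h2 : (P i).natAbs = (hex i).choose := Int.natAbs_natCast _
    have hi2' : padicValRat (hex i).choose (f i) = padicValRat (hex i).choose (g i) := by
      rw [← h2]; exact hi2
    exact (hex i).choose_spec.2 hi1 hi2'
end

section
/- Let U be an ultrafilter on I, *ℤ = ∏_U ℤ ⊆ *ℚ = ∏_U ℚ. Then *ℤ = ⋂_p O_p, where p ranges over all primes of *ℤ and O_p = {x ∈ *ℚ : x = 0 or v_p(x) ≥ 0} is the valuation ring of the p-adic valuation v_p on *ℚ. -/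
open Filter

lemma padicValRat_neg_of_den {q : ℚ} (hq : q.den ≠ 1) :
    padicValRat q.den.minFac q < 0 := by
  have hden1 : 1 < q.den := lt_of_le_of_ne q.pos (Ne.symm hq)
  have hp : q.den.minFac.Prime := Nat.minFac_prime hq
  haveI : Fact q.den.minFac.Prime := ⟨hp⟩
  rw [padicValRat]
  have h1 : padicValInt q.den.minFac q.num = 0 := by
    rw [padicValInt, padicValNat.eq_zero_of_not_dvd]
    intro hdvd
    exact hp.one_lt.ne' (Nat.Coprime.eq_one_of_dvd (Nat.Coprime.coprime_dvd_left hdvd q.reduced) (Nat.minFac_dvd _))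
  have h2 : 1 ≤ padicValNat q.den.minFac q.den :=
    one_le_padicValNat_of_dvd q.pos.ne' (Nat.minFac_dvd _)
  omega

/-- `*ℤ` is the intersection of the valuation rings `O_p ⊆ *ℚ` of the `p`-adic valuations
`v_p`, where `p` ranges over the primes of `*ℤ`: an element `x ∈ *ℚ` lies in (the image of)
`*ℤ` under the componentwise embedding `f` if and only if for every prime `p` of `*ℤ`,
either `x = 0` or `v_p(x) ≥ 0`. -/
theorem ultrapower_int_eq_inter_valuation_rings {I : Type*} (U : Ultrafilter I)
    (f : (↑U : Filter I).Germ ℤ →+* (↑U : Filter I).Germ ℚ)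
    (hf : ∀ x : I → ℤ, f ↑x = ↑(fun i => ((x i : ℚ))))
    (x : (↑U : Filter I).Germ ℚ) :
    (∃ z : (↑U : Filter I).Germ ℤ, f z = x) ↔
      (∀ p : I → ℤ, {i : I | 0 < p i ∧ Prime (p i)} ∈ U →
        x = 0 ∨ 0 ≤ nsValQ (↑p) x) := by
  induction x using Filter.Germ.inductionOn with | h xf =>
  constructor
  · rintro ⟨z, hz⟩ p _
    induction z using Filter.Germ.inductionOn with | h zf =>
    right
    rw [hf] at hz
    rw [← hz, nsValQ]
    show (0 : (↑U : Filter I).Germ ℤ) ≤ ↑(fun i => padicValRat (p i).natAbs ((zf i : ℚ)))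
    rw [← Filter.Germ.coe_zero, Filter.Germ.coe_le]
    filter_upwards with i
    rw [padicValRat.of_int]
    exact Int.ofNat_nonneg _
  · intro h
    by_cases hx0 : (↑xf : (↑U : Filter I).Germ ℚ) = 0
    · exact ⟨0, by rw [map_zero, hx0]⟩
    have hB : {i | (xf i).den = 1} ∈ U := by
      by_contra hB
      rw [← Ultrafilter.compl_notMem_iff, not_not] at hB
      set p : I → ℤ := fun i => if (xf i).den = 1 then 2 else ((xf i).den.minFac : ℤ) with hp
      have hprime : {i : I | 0 < p i ∧ Prime (p i)} ∈ U := by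
        apply Filter.univ_mem'
        intro i
        simp only [Set.mem_setOf_eq, hp]
        split
        · exact ⟨by norm_num, Int.prime_two⟩
        · next hne =>
          have := Nat.minFac_prime hne
          exact ⟨by exact_mod_cast this.pos, Nat.prime_iff_prime_int.mp this⟩
      rcases h p hprime with h0 | hle
      · exact hx0 h0
      rw [nsValQ] at hle
      replace hle : (0 : (↑U : Filter I).Germ ℤ) ≤
          ↑(fun i => padicValRat (p i).natAbs (xf i)) := hle
      rw [← Filter.Germ.coe_zero, Filter.Germ.coe_le] at hle
      have : {i | (xf i).den ≠ 1} ∩ {i | (0:ℤ) ≤ padicValRat (p i).natAbs (xf i)} ∈ U :=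
        Filter.inter_mem hB hle
      obtain ⟨i, hi1, hi2⟩ := Filter.nonempty_of_mem this
      have hi1' : (xf i).den ≠ 1 := hi1
      have hi2' : (0:ℤ) ≤ padicValRat (p i).natAbs (xf i) := hi2
      have hpi : p i = ((xf i).den.minFac : ℤ) := by simp [hp, hi1']
      rw [hpi, Int.natAbs_natCast] at hi2'
      exact absurd hi2' (not_le.mpr (padicValRat_neg_of_den hi1'))
    refine ⟨↑(fun i => (xf i).num), ?_⟩
    rw [hf]
    rw [Filter.Germ.coe_eq]
    filter_upwards [hB] with i hi
    exact (Rat.den_eq_one_iff _).mp hi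
end

section
/- Let U be a nonprincipal ultrafilter on a countably infinite I, *ℤ = ∏_U ℤ. For a proper ideal J of *ℤ, define F(J) = {pr(n) : n ∈ J}, where pr(n) = {p prime of *ℤ : p ∣ n} is the prime factor set of n. Then F(J) is a filter on the collection pr(*ℤ) of prime factor sets: ∅ ∉ F(J); F(J) is closed under intersection; and if pr(n) ∈ F(J), pr(n) ⊆ pr(m), then pr(m) ∈ F(J). -/
open Filter

/-- `p` is a prime of the ultrapower `*ℤ = ∏_U ℤ` if `p > 0`, `p ≠ 1`, and the only
divisors of `p` in `*ℤ` are `±1` and `±p`. -/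
def IsNSPrime {I : Type*} {U : Ultrafilter I} (p : (↑U : Filter I).Germ ℤ) : Prop :=
  0 < p ∧ p ≠ 1 ∧ ∀ y : (↑U : Filter I).Germ ℤ, y ∣ p → y = 1 ∨ y = -1 ∨ y = p ∨ y = -p

/-- The prime factor set `pr(n)` of `n ∈ *ℤ`: the set of primes of `*ℤ` dividing `n`. -/
def primeFactor {I : Type*} {U : Ultrafilter I} (n : (↑U : Filter I).Germ ℤ) :
    Set ((↑U : Filter I).Germ ℤ) :=
  {p | IsNSPrime p ∧ p ∣ n}

section Aux

variable {I : Type*} {U : Ultrafilter I}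


lemma germ_exists_rep (n : ((↑U : Filter I).Germ ℤ)) : ∃ f : I → ℤ, (↑f : ((↑U : Filter I).Germ ℤ)) = n :=
  n.inductionOn fun f => ⟨f, rfl⟩

lemma germ_dvd_of_eventually {f g : I → ℤ} (h : ∀ᶠ i in ↑U, f i ∣ g i) :
    (↑f : ((↑U : Filter I).Germ ℤ)) ∣ ↑g := by
  refine ⟨↑(fun i => g i / f i), ?_⟩
  rw [← Filter.Germ.coe_mul, Filter.Germ.coe_eq]
  filter_upwards [h] with i hi
  exact (Int.mul_ediv_cancel' hi).symm

lemma eventually_dvd_of_germ_dvd {f g : I → ℤ} (h : (↑f : ((↑U : Filter I).Germ ℤ)) ∣ ↑g) :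
    ∀ᶠ i in ↑U, f i ∣ g i := by
  obtain ⟨c, hc⟩ := h
  obtain ⟨h', rfl⟩ := germ_exists_rep c
  rw [← Filter.Germ.coe_mul, Filter.Germ.coe_eq] at hc
  filter_upwards [hc] with i hi
  exact ⟨h' i, hi⟩

lemma germ_eq_one_iff {f : I → ℤ} : (↑f : ((↑U : Filter I).Germ ℤ)) = 1 ↔ ∀ᶠ i in ↑U, f i = 1 := by
  rw [← Filter.Germ.coe_one, Filter.Germ.coe_eq]; rfl

lemma germ_eq_neg_one_iff {f : I → ℤ} : (↑f : ((↑U : Filter I).Germ ℤ)) = -1 ↔ ∀ᶠ i in ↑U, f i = -1 := by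
  rw [show (-1 : ((↑U : Filter I).Germ ℤ)) = ↑(-(1 : I → ℤ)) by rw [Filter.Germ.coe_neg, Filter.Germ.coe_one],
    Filter.Germ.coe_eq]
  rfl

lemma germ_eq_iff {f g : I → ℤ} : (↑f : ((↑U : Filter I).Germ ℤ)) = ↑g ↔ ∀ᶠ i in ↑U, f i = g i :=
  Filter.Germ.coe_eq

lemma germ_eq_neg_iff {f g : I → ℤ} : (↑f : ((↑U : Filter I).Germ ℤ)) = -↑g ↔ ∀ᶠ i in ↑U, f i = -g i := by
  rw [← Filter.Germ.coe_neg, Filter.Germ.coe_eq]; rfl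

lemma isNSPrime_of_eventually {f : I → ℤ} (h : ∀ᶠ i in ↑U, 2 ≤ f i ∧ Prime (f i)) :
    IsNSPrime (↑f : ((↑U : Filter I).Germ ℤ)) := by
  refine ⟨?_, ?_, ?_⟩
  · rw [Filter.Germ.coe_pos]
    filter_upwards [h] with i hi
    linarith [hi.1]
  · intro h1
    rw [germ_eq_one_iff] at h1
    rcases (h1.and h).exists with ⟨i, e, hi, _⟩
    omega
  · intro y hy
    obtain ⟨q, rfl⟩ := germ_exists_rep y
    have hd := eventually_dvd_of_germ_dvd hy
    have h4 : ∀ᶠ i in ↑U, q i = 1 ∨ q i = -1 ∨ q i = f i ∨ q i = -f i := by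
      filter_upwards [hd, h] with i hdi hi
      have hnat : (q i).natAbs ∣ (f i).natAbs := Int.natAbs_dvd_natAbs.mpr hdi
      have hp : Nat.Prime (f i).natAbs := Int.prime_iff_natAbs_prime.mp hi.2
      rcases (Nat.Prime.eq_one_or_self_of_dvd hp _ hnat) with h1 | h2
      · rcases Int.natAbs_eq (q i) with e | e <;> rw [h1] at e <;> omega
      · rcases Int.natAbs_eq (q i) with e | e <;> rw [h2] at e <;>
          rcases Int.natAbs_eq (f i) with e' | e' <;> omega
    rw [Ultrafilter.eventually_or, Ultrafilter.eventually_or, Ultrafilter.eventually_or] at h4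
    rcases h4 with h' | h' | h' | h'
    · exact Or.inl (germ_eq_one_iff.mpr h')
    · exact Or.inr (Or.inl (germ_eq_neg_one_iff.mpr h'))
    · exact Or.inr (Or.inr (Or.inl (germ_eq_iff.mpr h')))
    · exact Or.inr (Or.inr (Or.inr (germ_eq_neg_iff.mpr h')))

lemma eventually_prime_of_isNSPrime {f : I → ℤ} (h : IsNSPrime (↑f : ((↑U : Filter I).Germ ℤ))) :
    ∀ᶠ i in ↑U, Prime (f i) := by
  obtain ⟨hpos, hne1, hdiv⟩ := h
  have hpos' : ∀ᶠ i in ↑U, 0 < f i := Filter.Germ.coe_pos.mp hpos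
  have hne1' : ∀ᶠ i in ↑U, f i ≠ 1 :=
    Ultrafilter.eventually_not.mpr fun hc => hne1 (germ_eq_one_iff.mpr hc)
  have h2 : ∀ᶠ i in ↑U, 2 ≤ f i := by
    filter_upwards [hpos', hne1'] with i h1 h2; omega
  set q : I → ℤ := fun i => ((f i).natAbs.minFac : ℤ) with hq
  have hq2 : ∀ᶠ i in ↑U, 2 ≤ q i ∧ Prime (q i) ∧ q i ∣ f i := by
    filter_upwards [h2] with i hi
    simp only [hq]
    have hab : 2 ≤ (f i).natAbs := by omega
    have hprime : Nat.Prime (f i).natAbs.minFac := Nat.minFac_prime (by omega)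
    refine ⟨by exact_mod_cast hprime.two_le, Nat.prime_iff_prime_int.mp hprime, ?_⟩
    have : ((f i).natAbs.minFac : ℤ) ∣ ((f i).natAbs : ℤ) :=
      Int.natCast_dvd_natCast.mpr (Nat.minFac_dvd _)
    exact this.trans (Int.natAbs_dvd.mpr dvd_rfl)
  have hqprime : IsNSPrime (↑q : ((↑U : Filter I).Germ ℤ)) :=
    isNSPrime_of_eventually (hq2.mono fun i hi => ⟨hi.1, hi.2.1⟩)
  have hqdvd : (↑q : ((↑U : Filter I).Germ ℤ)) ∣ ↑f := germ_dvd_of_eventually (hq2.mono fun i hi => hi.2.2)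
  rcases hdiv _ hqdvd with h' | h' | h' | h'
  · rcases ((germ_eq_one_iff.mp h').and hq2).exists with ⟨i, e, hi, _⟩; omega
  · rcases ((germ_eq_neg_one_iff.mp h').and hq2).exists with ⟨i, e, hi, _⟩; omega
  · filter_upwards [germ_eq_iff.mp h', hq2] with i e hi
    rw [← e]; exact hi.2.1
  · rcases ((germ_eq_neg_iff.mp h').and (hq2.and hpos')).exists with ⟨i, e, ⟨hi, _, _⟩, hp⟩
    omega

lemma isNSPrime_dvd_mul {p n m : ((↑U : Filter I).Germ ℤ)} (hp : IsNSPrime p) (h : p ∣ n * m) :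
    p ∣ n ∨ p ∣ m := by
  obtain ⟨q, rfl⟩ := germ_exists_rep p
  obtain ⟨f, rfl⟩ := germ_exists_rep n
  obtain ⟨g, rfl⟩ := germ_exists_rep m
  rw [← Filter.Germ.coe_mul] at h
  have hd := eventually_dvd_of_germ_dvd h
  have hpr := eventually_prime_of_isNSPrime hp
  have : ∀ᶠ i in ↑U, q i ∣ f i ∨ q i ∣ g i := by
    filter_upwards [hd, hpr] with i hi hpi
    exact (Prime.dvd_mul hpi).mp hi
  rw [Ultrafilter.eventually_or] at this
  exact this.imp germ_dvd_of_eventually germ_dvd_of_eventually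

lemma primeFactor_nonempty {n : ((↑U : Filter I).Germ ℤ)} (h1 : n ≠ 1) (h2 : n ≠ -1) :
    (primeFactor n).Nonempty := by
  obtain ⟨f, rfl⟩ := germ_exists_rep n
  set q : I → ℤ := fun i => if 2 ≤ (f i).natAbs then ((f i).natAbs.minFac : ℤ) else 2 with hq
  have hq2 : ∀ i, 2 ≤ q i ∧ Prime (q i) := by
    intro i
    simp only [hq]
    split
    · have hprime : Nat.Prime (f i).natAbs.minFac := Nat.minFac_prime (by omega)
      exact ⟨by exact_mod_cast hprime.two_le, Nat.prime_iff_prime_int.mp hprime⟩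
    · exact ⟨le_refl _, Int.prime_two⟩
  have hprime : IsNSPrime (↑q : ((↑U : Filter I).Germ ℤ)) :=
    isNSPrime_of_eventually (Filter.Eventually.of_forall hq2)
  refine ⟨↑q, hprime, germ_dvd_of_eventually ?_⟩
  have hne1 : ∀ᶠ i in ↑U, f i ≠ 1 :=
    Ultrafilter.eventually_not.mpr fun hc => h1 (germ_eq_one_iff.mpr hc)
  have hne2 : ∀ᶠ i in ↑U, f i ≠ -1 :=
    Ultrafilter.eventually_not.mpr fun hc => h2 (germ_eq_neg_one_iff.mpr hc)
  filter_upwards [hne1, hne2] with i e1 e2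
  simp only [hq]
  split_ifs with hcase
  · have : ((f i).natAbs.minFac : ℤ) ∣ ((f i).natAbs : ℤ) :=
      Int.natCast_dvd_natCast.mpr (Nat.minFac_dvd _)
    exact this.trans (Int.natAbs_dvd.mpr dvd_rfl)
  · have : f i = 0 := by omega
    simp [this]

end Aux

/-- For a proper ideal `J` of `*ℤ` (with `U` a nonprincipal ultrafilter on a countably
infinite set), the family `F(J) = {pr(n) : n ∈ J}` of prime factor sets of elements of `J`
is a filter on the collection of prime factor sets: it does not contain `∅`, it is closed
under intersections, and it is upward closed among prime factor sets. -/
theorem primeFactor_filter_of_ideal {I : Type*} [Countable I] [Infinite I]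
    (U : Ultrafilter I) (hU : ∀ i : I, U ≠ pure i)
    (J : Ideal ((↑U : Filter I).Germ ℤ)) (hJ : J ≠ ⊤) :
    ∅ ∉ primeFactor '' (J : Set ((↑U : Filter I).Germ ℤ)) ∧
    (∀ S ∈ primeFactor '' (J : Set ((↑U : Filter I).Germ ℤ)),
      ∀ T ∈ primeFactor '' (J : Set ((↑U : Filter I).Germ ℤ)),
        S ∩ T ∈ primeFactor '' (J : Set ((↑U : Filter I).Germ ℤ))) ∧
    (∀ S ∈ primeFactor '' (J : Set ((↑U : Filter I).Germ ℤ)),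
      ∀ m : (↑U : Filter I).Germ ℤ, S ⊆ primeFactor m →
        primeFactor m ∈ primeFactor '' (J : Set ((↑U : Filter I).Germ ℤ))) := by
  refine ⟨?_, ?_, ?_⟩
  · rintro ⟨n, hn, hempty⟩
    have h1 : n ≠ 1 := fun h => hJ (J.eq_top_of_isUnit_mem hn (h ▸ isUnit_one))
    have h2 : n ≠ -1 := fun h => hJ (J.eq_top_of_isUnit_mem hn (h ▸ (isUnit_one).neg))
    obtain ⟨p, hp⟩ := primeFactor_nonempty h1 h2
    rw [hempty] at hp
    exact hp
  · rintro S ⟨n, hn, rfl⟩ T ⟨m, hm, rfl⟩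
    obtain ⟨f, rfl⟩ := germ_exists_rep n
    obtain ⟨g, rfl⟩ := germ_exists_rep m
    set d : I → ℤ := fun i => (Int.gcd (f i) (g i) : ℤ) with hd
    have hbez : (↑d : (↑U : Filter I).Germ ℤ) =
        ↑f * ↑(fun i => Int.gcdA (f i) (g i)) + ↑g * ↑(fun i => Int.gcdB (f i) (g i)) := by
      rw [← Filter.Germ.coe_mul, ← Filter.Germ.coe_mul, ← Filter.Germ.coe_add,
        Filter.Germ.coe_eq]
      exact Filter.Eventually.of_forall fun i => Int.gcd_eq_gcd_ab (f i) (g i)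
    have hdJ : (↑d : (↑U : Filter I).Germ ℤ) ∈ J := by
      rw [hbez]
      exact J.add_mem (J.mul_mem_right _ hn) (J.mul_mem_right _ hm)
    refine ⟨↑d, hdJ, ?_⟩
    ext p
    constructor
    · rintro ⟨hp, hdvd⟩
      have hdf : (↑d : (↑U : Filter I).Germ ℤ) ∣ ↑f :=
        germ_dvd_of_eventually (Filter.Eventually.of_forall fun i => Int.gcd_dvd_left (f i) (g i))
      have hdg : (↑d : (↑U : Filter I).Germ ℤ) ∣ ↑g :=
        germ_dvd_of_eventually (Filter.Eventually.of_forall fun i => Int.gcd_dvd_right (f i) (g i))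
      exact ⟨⟨hp, hdvd.trans hdf⟩, ⟨hp, hdvd.trans hdg⟩⟩
    · rintro ⟨⟨hp, hpf⟩, ⟨_, hpg⟩⟩
      refine ⟨hp, ?_⟩
      rw [hbez]
      exact dvd_add (hpf.mul_right _) (hpg.mul_right _)
  · rintro S ⟨n, hn, rfl⟩ m hsub
    refine ⟨n * m, J.mul_mem_right m hn, ?_⟩
    ext p
    constructor
    · rintro ⟨hp, hdvd⟩
      rcases isNSPrime_dvd_mul hp hdvd with h | h
      · exact hsub ⟨hp, h⟩
      · exact ⟨hp, h⟩
    · rintro ⟨hp, hdvd⟩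
      exact ⟨hp, hdvd.mul_left n⟩
end

section
/- Let S be a totally ordered commutative semigroup (written additively) in which multiples are unique (n·x = n·y implies x = y for n > 0), and let T ⊆ S be a subsemigroup that is upward closed without right-end-point (x ∈ T, x ≤ y ⟹ y ∈ T). Then T is radical (n·x ∈ T ⟹ x ∈ T for n > 0) if and only if T is prime (a + b ∈ T ⟹ a ∈ T or b ∈ T). -/
/-- `pmul n x` is the `(n+1)`-fold sum `x + x + ⋯ + x` in an additive semigroup, so that
positive multiples are `pmul 0 x = x`, `pmul 1 x = x + x`, etc. -/
def pmul {S : Type*} [AddCommSemigroup S] (n : ℕ) (x : S) : S :=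
  Nat.rec x (fun _ ih => x + ih) n

/-- Let `S` be a totally ordered commutative semigroup in which positive multiples are
unique and the order is compatible with addition, all elements being nonnegative in the
sense `a ≤ a + b`. Let `T ⊆ S` be a subsemigroup that is upward closed (hence without
right-end-point). Then `T` is radical (`n·x ∈ T → x ∈ T` for `n > 0`) if and only if `T`
is prime (`a + b ∈ T → a ∈ T ∨ b ∈ T`). -/
theorem radical_iff_prime_subsemigroup {S : Type*} [AddCommSemigroup S] [LinearOrder S]
    (hcov : ∀ x y z : S, x < y → z + x < z + y)
    (hpos : ∀ a b : S, a ≤ a + b)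
    (huniq : ∀ (n : ℕ) (x y : S), pmul n x = pmul n y → x = y)
    (T : Set S)
    (hTadd : ∀ x ∈ T, ∀ y ∈ T, x + y ∈ T)
    (hTup : ∀ x ∈ T, ∀ y : S, x ≤ y → y ∈ T) :
    (∀ (n : ℕ) (x : S), pmul n x ∈ T → x ∈ T) ↔
      (∀ a b : S, a + b ∈ T → a ∈ T ∨ b ∈ T) := by
  have hmono : ∀ x y z : S, x ≤ y → z + x ≤ z + y := by
    intro x y z h
    rcases h.lt_or_eq with h | h
    · exact (hcov x y z h).le
    · rw [h]
  constructor
  · intro hrad a b hab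
    rcases le_total a b with h | h
    · right
      apply hrad 1 b
      have : a + b ≤ b + b := by rw [add_comm a b]; exact hmono a b b h
      exact hTup _ hab _ this
    · left
      apply hrad 1 a
      have : a + b ≤ a + a := hmono b a a h
      exact hTup _ hab _ this
  · intro hp n x
    induction n with
    | zero => exact fun h => h
    | succ k ih =>
      intro h
      rcases hp x (pmul k x) h with h' | h'
      · exact h'
      · exact ih h'
end
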